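/- Let K be an algebraically closed field and A a commutative K-algebra of finite type. Then the completion Â = lim←_I A/I over all ideals I of finite codimension is isomorphic as a K-algebra to the product ∏_𝔪 Â_𝔪 over all maximal ideals 𝔪 of A, where Â_𝔪 = lim←_n A/𝔪ⁿ is the 𝔪-adic completion. -/

import Mathlib

namespace Stmt12

variable (K : Type*) [Field K] (A : Type*) [CommRing A] [Algebra K A]

/-- The directed set of ideals of finite codimension. -/
def S : Type _ := {I : Ideal A // FiniteDimensional K (A ⧸ I)}

/-- The completion `Â = lim← A/I` over ideals of finite codimension, realized as the
subalgebra of compatible families in the product of the quotients. -/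
def hatCarrier : Subalgebra K (Π I : S K A, A ⧸ I.1) where
  carrier := {x | ∀ (I J : S K A) (h : I.1 ≤ J.1), Ideal.Quotient.factor (S := I.1) (T := J.1) h (x I) = x J}
  mul_mem' {x y} hx hy := fun I J h => by
    show Ideal.Quotient.factor (S := I.1) (T := J.1) h (x I * y I) = x J * y J
    rw [map_mul, hx I J h, hy I J h]
  add_mem' {x y} hx hy := fun I J h => by
    show Ideal.Quotient.factor (S := I.1) (T := J.1) h (x I + y I) = x J + y J
    rw [map_add, hx I J h, hy I J h]
  one_mem' := fun I J h => map_one _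
  algebraMap_mem' := fun k I J h => by
    show Ideal.Quotient.factor (S := I.1) (T := J.1) h (algebraMap K (A ⧸ I.1) k) = algebraMap K (A ⧸ J.1) k
    simp [← Ideal.Quotient.algebraMap_eq, ← Ideal.Quotient.mk_algebraMap,
      Ideal.Quotient.factor_mk]

noncomputable instance (m : MaximalSpectrum A) : Algebra K (AdicCompletion m.asIdeal A) :=
  RingHom.toAlgebra ((algebraMap A (AdicCompletion m.asIdeal A)).comp (algebraMap K A))

/-! ### Auxiliary material -/

section Aux

variable {K A}

open Polynomial in
/-- Any quotient by a power of a maximal ideal is finite dimensional over `K`. -/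
lemma pow_findim [IsAlgClosed K] [Algebra.FiniteType K A]
    (m : Ideal A) [m.IsMaximal] (n : ℕ) : FiniteDimensional K (A ⧸ m ^ n) := by
  letI : Field (A ⧸ m) := Ideal.Quotient.field m
  haveI hres : FiniteDimensional K (A ⧸ m) := by
    haveI : Algebra.FiniteType K (A ⧸ m) :=
      Algebra.FiniteType.of_surjective (Ideal.Quotient.mkₐ K m)
        (Ideal.Quotient.mkₐ_surjective K m)
    exact finite_of_finite_type_of_isJacobsonRing K (A ⧸ m)
  haveI : Algebra.IsIntegral K (A ⧸ m) := Algebra.IsIntegral.of_finite K (A ⧸ m)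
  have hsurj : Function.Surjective (algebraMap K (A ⧸ m)) :=
    IsAlgClosed.algebraMap_bijective_of_isIntegral.2
  haveI : Algebra.FiniteType K (A ⧸ m ^ n) :=
    Algebra.FiniteType.of_surjective (Ideal.Quotient.mkₐ K (m ^ n))
      (Ideal.Quotient.mkₐ_surjective K (m ^ n))
  haveI : Algebra.IsIntegral K (A ⧸ m ^ n) := by
    constructor
    intro z
    obtain ⟨a, rfl⟩ := Ideal.Quotient.mk_surjective z
    obtain ⟨c, hc⟩ := hsurj (Ideal.Quotient.mk m a)
    refine ⟨(X - C c) ^ n, (monic_X_sub_C c).pow n, ?_⟩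
    have hmem : a - algebraMap K A c ∈ m := by
      rw [← Ideal.Quotient.eq_zero_iff_mem, map_sub, Ideal.Quotient.mk_algebraMap, hc, sub_self]
    have h0 : Ideal.Quotient.mk (m ^ n) ((a - algebraMap K A c) ^ n) = 0 :=
      Ideal.Quotient.eq_zero_iff_mem.mpr (Ideal.pow_mem_pow hmem n)
    rw [← Polynomial.aeval_def, map_pow, map_sub, aeval_X, aeval_C]
    rw [← Ideal.Quotient.mk_algebraMap, ← map_sub, ← map_pow, h0]
  exact Algebra.IsIntegral.finite

/-- pairwise coprime finset infimum equals the product. -/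
lemma inf_eq_prod_of_coprime {R : Type*} [CommRing R] {ι : Type*}
    (s : Finset ι) (f : ι → Ideal R)
    (h : ∀ i ∈ s, ∀ j ∈ s, i ≠ j → IsCoprime (f i) (f j)) :
    s.inf f = ∏ i ∈ s, f i := by
  classical
  induction s using Finset.induction_on with
  | empty => simp
  | @insert a s ha ih =>
    rw [Finset.inf_insert, Finset.prod_insert ha,
      ih (fun i hi j hj hij => h i (Finset.mem_insert_of_mem hi) j
        (Finset.mem_insert_of_mem hj) hij)]
    have hcop : IsCoprime (f a) (∏ i ∈ s, f i) :=
      IsCoprime.prod_right fun i hi =>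
        h a (Finset.mem_insert_self a s) i (Finset.mem_insert_of_mem hi)
          (fun hh => ha (hh ▸ hi))
    exact Ideal.inf_eq_mul_of_isCoprime hcop

lemma maximalSpectrum_ne {i j : MaximalSpectrum A} (h : i ≠ j) :
    i.asIdeal ≠ j.asIdeal := by
  intro hh
  apply h
  cases i; cases j; cases hh; rfl

lemma coprime_pow_of_ne {i j : MaximalSpectrum A} (h : i ≠ j) (N N' : ℕ) :
    IsCoprime (i.asIdeal ^ N) (j.asIdeal ^ N') :=
  (Ideal.isCoprime_iff_sup_eq.mpr
    (i.isMaximal.coprime_of_ne j.isMaximal (maximalSpectrum_ne h))).pow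

/-- Every finite-codimensional ideal contains a finite intersection of powers of
maximal ideals. -/
lemma exists_inf_le [IsAlgClosed K] [Algebra.FiniteType K A] (I : Ideal A)
    (hI : FiniteDimensional K (A ⧸ I)) :
    ∃ (F : Finset (MaximalSpectrum A)) (N : ℕ), (⨅ m ∈ F, m.asIdeal ^ N) ≤ I := by
  classical
  haveI := hI
  haveI : IsArtinianRing (A ⧸ I) := IsArtinianRing.of_finite K (A ⧸ I)
  set π := Ideal.Quotient.mk I with hπ
  have hπs : Function.Surjective π := Ideal.Quotient.mk_surjective
  have hfin := IsArtinianRing.setOfPred_isMaximal_finite (A ⧸ I)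
  set Fb : Finset (Ideal (A ⧸ I)) := hfin.toFinset with hFb
  obtain ⟨k, hk⟩ := IsArtinianRing.isNilpotent_jacobson_bot (R := A ⧸ I)
  have hmax : ∀ J ∈ Fb, J.IsMaximal := fun J hJ => hfin.mem_toFinset.mp hJ
  let g : {J // J ∈ Fb} → MaximalSpectrum A := fun J =>
    ⟨Ideal.comap π J.1,
      haveI := hmax J.1 J.2
      Ideal.comap_isMaximal_of_surjective π hπs⟩
  refine ⟨Fb.attach.image g, k, ?_⟩
  intro a ha
  rw [Submodule.mem_iInf] at ha
  rw [← Ideal.Quotient.eq_zero_iff_mem]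
  have h1 : ∀ J ∈ Fb, π a ∈ J ^ k := by
    intro J hJ
    haveI : J.IsMaximal := hfin.mem_toFinset.mp hJ
    have hmF : g ⟨J, hJ⟩ ∈ Fb.attach.image g :=
      Finset.mem_image.mpr ⟨⟨J, hJ⟩, Finset.mem_attach _ _, rfl⟩
    have ha' := ha (g ⟨J, hJ⟩)
    rw [Submodule.mem_iInf] at ha'
    have haa : a ∈ (Ideal.comap π J) ^ k := ha' hmF
    have : π a ∈ Ideal.map π ((Ideal.comap π J) ^ k) := Ideal.mem_map_of_mem _ haa
    rwa [Ideal.map_pow, Ideal.map_comap_of_surjective π hπs] at this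
  have h2 : π a ∈ Fb.inf (fun J => J ^ k) := Submodule.mem_finsetInf.mpr h1
  have hcop : ∀ J ∈ Fb, ∀ J' ∈ Fb, J ≠ J' → IsCoprime (J ^ k) (J' ^ k) := by
    intro J hJ J' hJ' hne
    haveI : J.IsMaximal := hfin.mem_toFinset.mp hJ
    haveI : J'.IsMaximal := hfin.mem_toFinset.mp hJ'
    exact (Ideal.isCoprime_iff_sup_eq.mpr
      (‹J.IsMaximal›.coprime_of_ne ‹J'.IsMaximal› hne)).pow
  have h3 : Fb.inf (fun J => J ^ k) ≤ ⊥ := by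
    rw [inf_eq_prod_of_coprime _ _ hcop]
    calc ∏ J ∈ Fb, J ^ k = (∏ J ∈ Fb, J) ^ k := by rw [Finset.prod_pow]
      _ ≤ (Fb.inf id) ^ k := Ideal.pow_right_mono Ideal.prod_le_inf k
      _ = (Ideal.jacobson ⊥) ^ k := by
          rw [Finset.inf_id_eq_sInf, hFb, hfin.coe_toFinset]
          congr 1
          simp [Ideal.jacobson]
      _ = ⊥ := by rw [hk]; rfl
  exact h3 h2

/-- `factor` commutes with the `K`-algebra map. -/
lemma factor_algebraMap {I J : Ideal A} (h : I ≤ J) (k : K) :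
    Ideal.Quotient.factor (S := I) (T := J) h (algebraMap K (A ⧸ I) k) = algebraMap K (A ⧸ J) k := by
  rw [← Ideal.Quotient.mk_algebraMap, Ideal.Quotient.factor_mk, Ideal.Quotient.mk_algebraMap]

lemma factor_smul {I J : Ideal A} (h : I ≤ J) (k : K) (x : A ⧸ I) :
    Ideal.Quotient.factor (S := I) (T := J) h (k • x) = k • Ideal.Quotient.factor (S := I) (T := J) h x := by
  rw [Algebra.smul_def, map_mul, factor_algebraMap, ← Algebra.smul_def]

/-- The quotient by a finite intersection of powers of maximal ideals is
finite-dimensional. -/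
lemma inf_findim [IsAlgClosed K] [Algebra.FiniteType K A]
    (F : Finset (MaximalSpectrum A)) (N : ℕ) :
    FiniteDimensional K (A ⧸ (⨅ m ∈ F, m.asIdeal ^ N)) := by
  classical
  set J : Ideal A := ⨅ m ∈ F, m.asIdeal ^ N with hJ
  haveI : ∀ m : F, FiniteDimensional K (A ⧸ (m : MaximalSpectrum A).asIdeal ^ N) :=
    fun m => pow_findim _ N
  have hle : ∀ m : F, J ≤ (m : MaximalSpectrum A).asIdeal ^ N := by
    intro m
    rw [hJ]
    exact biInf_le _ m.2
  let f : (A ⧸ J) →ₗ[K] (Π m : F, A ⧸ (m : MaximalSpectrum A).asIdeal ^ N) :=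
    { toFun := fun x m => Ideal.Quotient.factor (S := J) (hle m) x
      map_add' := fun x y => by ext m; simp
      map_smul' := fun k x => by ext m; exact factor_smul (hle m) k x }
  have hinj : Function.Injective f := by
    intro x y hxy
    obtain ⟨a, rfl⟩ := Ideal.Quotient.mk_surjective x
    obtain ⟨b, rfl⟩ := Ideal.Quotient.mk_surjective y
    rw [Ideal.Quotient.mk_eq_mk_iff_sub_mem]
    rw [hJ]
    rw [Submodule.mem_iInf]
    intro m
    rw [Submodule.mem_iInf]
    intro hm
    have := congrFun hxy ⟨m, hm⟩
    simp only [f, LinearMap.coe_mk, AddHom.coe_mk, Ideal.Quotient.factor_mk] at this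
    exact (Ideal.Quotient.mk_eq_mk_iff_sub_mem _ _).mp this
  exact FiniteDimensional.of_injective f hinj

end Aux

/-! ### The adic completion side -/

section Adic

variable {K A}

lemma smul_top_eq (I : Ideal A) (n : ℕ) : (I ^ n • ⊤ : Ideal A) = I ^ n := by
  ext x; simp

/-- Identify `A ⧸ I ^ n` with the quotient used in `AdicCompletion`. -/
noncomputable def qcast (I : Ideal A) (n : ℕ) :
    (A ⧸ I ^ n) ≃+* (A ⧸ (I ^ n • ⊤ : Ideal A)) :=
  Ideal.quotEquivOfEq (smul_top_eq I n).symm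

lemma qcast_mk (I : Ideal A) (n : ℕ) (a : A) :
    qcast I n (Ideal.Quotient.mk (I ^ n) a) = Ideal.Quotient.mk (I ^ n • ⊤ : Ideal A) a :=
  Ideal.quotEquivOfEq_mk _ a

lemma evalₐ_val {I : Ideal A} (z : AdicCompletion I A) {n : ℕ} {a : A}
    (h : z.val n = Submodule.Quotient.mk a) :
    AdicCompletion.evalₐ I n z = Ideal.Quotient.mk (I ^ n) a := by
  have : AdicCompletion.evalₐ I n z =
      Ideal.quotientEquivAlgOfEq A (I := (I ^ n • ⊤ : Ideal A)) (J := I ^ n)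
        (by ext x; simp) (z.val n) := rfl
  rw [this, h]
  rfl

lemma evalₐ_factor {I : Ideal A} {n N : ℕ} (h : n ≤ N) (z : AdicCompletion I A) :
    Ideal.Quotient.factor (S := I ^ N) (T := I ^ n) (Ideal.pow_le_pow_right h)
      (AdicCompletion.evalₐ I N z) = AdicCompletion.evalₐ I n z := by
  obtain ⟨a, ha⟩ := Submodule.Quotient.mk_surjective _ (z.val N)
  have h2 : z.val n = Submodule.Quotient.mk a := by
    rw [← z.property h, ← ha]; rfl
  rw [evalₐ_val z ha.symm, evalₐ_val z h2, Ideal.Quotient.factor_mk]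

end Adic

/-! ### The comparison map -/

section Phi

variable {K A}
variable [IsAlgClosed K] [Algebra.FiniteType K A]

/-- The element of `S K A` given by a power of a maximal ideal. -/
noncomputable def SmId (m : MaximalSpectrum A) (n : ℕ) : S K A :=
  ⟨m.asIdeal ^ n, pow_findim m.asIdeal n⟩

lemma hat_compat (x : hatCarrier K A) (I J : S K A) (h : I.1 ≤ J.1) :
    Ideal.Quotient.factor (S := I.1) (T := J.1) h (x.1 I) = x.1 J :=
  x.2 I J h

/-- Component of the comparison map at a maximal ideal. -/
noncomputable def toAdic (x : hatCarrier K A) (m : MaximalSpectrum A) :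
    AdicCompletion m.asIdeal A :=
  ⟨fun n => qcast m.asIdeal n (x.1 (SmId m n)), by
    intro a b hab
    obtain ⟨r, hr⟩ := Ideal.Quotient.mk_surjective (x.1 (SmId m b))
    have h1 : x.1 (SmId m a) = Ideal.Quotient.mk (SmId (K := K) (A := A) m a).1 r := by
      erw [← hat_compat x (SmId m b) (SmId m a) (Ideal.pow_le_pow_right hab), ← hr,
        Ideal.Quotient.factor_mk]
    show AdicCompletion.transitionMap m.asIdeal A hab
      (qcast m.asIdeal b (x.1 (SmId m b))) = qcast m.asIdeal a (x.1 (SmId m a))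
    rw [← hr, h1]
    show AdicCompletion.transitionMap m.asIdeal A hab
        (qcast m.asIdeal b (Ideal.Quotient.mk (m.asIdeal ^ b) r)) =
      qcast m.asIdeal a (Ideal.Quotient.mk (m.asIdeal ^ a) r)
    rw [qcast_mk, qcast_mk]
    rfl⟩

lemma toAdic_val (x : hatCarrier K A) (m : MaximalSpectrum A) (n : ℕ) :
    (toAdic x m).val n = qcast m.asIdeal n (x.1 (SmId m n)) := rfl

/-- The comparison map as an algebra homomorphism. -/
noncomputable def phi : hatCarrier K A →ₐ[K]
    Π m : MaximalSpectrum A, AdicCompletion m.asIdeal A where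
  toFun x m := toAdic x m
  map_one' := by
    refine funext fun m => Subtype.ext (funext fun n => ?_)
    show qcast m.asIdeal n ((1 : hatCarrier K A).1 (SmId m n)) = 1
    erw [show ((1 : hatCarrier K A).1 (SmId m n)) = 1 from rfl, map_one]
    all_goals rfl
  map_mul' x y := by
    refine funext fun m => Subtype.ext (funext fun n => ?_)
    show qcast m.asIdeal n ((x * y).1 (SmId m n)) =
      (toAdic x m * toAdic y m).val n
    erw [show ((x * y : hatCarrier K A).1 (SmId m n)) =
      x.1 (SmId m n) * y.1 (SmId m n) from rfl, map_mul]
    all_goals rfl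
  map_zero' := by
    refine funext fun m => Subtype.ext (funext fun n => ?_)
    show qcast m.asIdeal n ((0 : hatCarrier K A).1 (SmId m n)) = 0
    erw [show ((0 : hatCarrier K A).1 (SmId m n)) = 0 from rfl, map_zero]
    all_goals rfl
  map_add' x y := by
    refine funext fun m => Subtype.ext (funext fun n => ?_)
    show qcast m.asIdeal n ((x + y).1 (SmId m n)) =
      (toAdic x m + toAdic y m).val n
    erw [show ((x + y : hatCarrier K A).1 (SmId m n)) =
      x.1 (SmId m n) + y.1 (SmId m n) from rfl, map_add]
    all_goals rfl
  commutes' k := by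
    refine funext fun m => Subtype.ext (funext fun n => ?_)
    show qcast m.asIdeal n ((algebraMap K (hatCarrier K A) k).1 (SmId m n)) =
      (algebraMap K (Π m : MaximalSpectrum A, AdicCompletion m.asIdeal A) k m).val n
    have h1 : ((algebraMap K (hatCarrier K A) k).1 (SmId m n)) =
        algebraMap K (A ⧸ m.asIdeal ^ n) k := rfl
    have h2 : (algebraMap K (Π m : MaximalSpectrum A, AdicCompletion m.asIdeal A) k m).val n =
        Ideal.Quotient.mk (m.asIdeal ^ n • ⊤ : Ideal A) (algebraMap K A k) := rfl
    rw [h1, h2, ← Ideal.Quotient.mk_algebraMap, qcast_mk]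

end Phi

/-! ### Surjectivity data -/

section Surj

variable {K A}
variable [IsAlgClosed K] [Algebra.FiniteType K A]
variable (y : Π m : MaximalSpectrum A, AdicCompletion m.asIdeal A)

/-- `r` is a good approximation for `I` witnessed by `(F, N)`. -/
def P (I : S K A) (r : A) (F : Finset (MaximalSpectrum A)) (N : ℕ) : Prop :=
  (⨅ m ∈ F, m.asIdeal ^ N) ≤ I.1 ∧
    ∀ m ∈ F, Ideal.Quotient.mk (m.asIdeal ^ N) r = AdicCompletion.evalₐ m.asIdeal N (y m)

lemma exists_match (F : Finset (MaximalSpectrum A)) (N : ℕ) :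
    ∃ r : A, ∀ m ∈ F, Ideal.Quotient.mk (m.asIdeal ^ N) r =
      AdicCompletion.evalₐ m.asIdeal N (y m) := by
  classical
  have hcop : Pairwise fun (i j : F) =>
      IsCoprime ((i : MaximalSpectrum A).asIdeal ^ N) ((j : MaximalSpectrum A).asIdeal ^ N) := by
    intro i j hij
    exact coprime_pow_of_ne (fun h => hij (Subtype.ext h)) N N
  obtain ⟨r, hr⟩ := Ideal.pi_quotient_surjective hcop
    (fun m : F => AdicCompletion.evalₐ (m : MaximalSpectrum A).asIdeal N (y m))
  exact ⟨r, fun m hm => hr ⟨m, hm⟩⟩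

lemma sub_mem_of_match {F F' : Finset (MaximalSpectrum A)} {N N' : ℕ} {r r' : A}
    (hFF : F ⊆ F') (hNN : N ≤ N')
    (hr : ∀ m ∈ F, Ideal.Quotient.mk (m.asIdeal ^ N) r =
      AdicCompletion.evalₐ m.asIdeal N (y m))
    (hr' : ∀ m ∈ F', Ideal.Quotient.mk (m.asIdeal ^ N') r' =
      AdicCompletion.evalₐ m.asIdeal N' (y m)) :
    r - r' ∈ (⨅ m ∈ F, m.asIdeal ^ N) := by
  rw [Submodule.mem_iInf]
  intro m
  rw [Submodule.mem_iInf]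
  intro hm
  rw [← Ideal.Quotient.eq_zero_iff_mem, map_sub]
  have h1 : Ideal.Quotient.mk (m.asIdeal ^ N) r' =
      AdicCompletion.evalₐ m.asIdeal N (y m) := by
    have := congrArg (Ideal.Quotient.factor (S := m.asIdeal ^ N') (T := m.asIdeal ^ N)
      (Ideal.pow_le_pow_right hNN)) (hr' m (hFF hm))
    rwa [Ideal.Quotient.factor_mk, evalₐ_factor hNN] at this
  rw [hr m hm, h1, sub_self]

lemma exists_P (I : S K A) : ∃ r F N, P y I r F N := by
  obtain ⟨F, N, hFN⟩ := exists_inf_le I.1 I.2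
  obtain ⟨r, hr⟩ := exists_match y F N
  exact ⟨r, F, N, hFN, hr⟩

lemma P_unique {I : S K A} {r r' : A} {F F' : Finset (MaximalSpectrum A)} {N N' : ℕ}
    (h : P y I r F N) (h' : P y I r' F' N') :
    Ideal.Quotient.mk I.1 r = Ideal.Quotient.mk I.1 r' := by
  classical
  obtain ⟨r'', hr''⟩ := exists_match y (F ∪ F') (max N N')
  have h1 : r - r'' ∈ I.1 :=
    h.1 (sub_mem_of_match y Finset.subset_union_left (le_max_left N N') h.2 hr'')
  have h2 : r' - r'' ∈ I.1 :=
    h'.1 (sub_mem_of_match y Finset.subset_union_right (le_max_right N N') h'.2 hr'')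
  rw [Ideal.Quotient.mk_eq_mk_iff_sub_mem]
  have : r - r' = (r - r'') - (r' - r'') := by ring
  rw [this]
  exact sub_mem h1 h2

/-- The candidate preimage family. -/
noncomputable def xI (I : S K A) : A ⧸ I.1 :=
  Ideal.Quotient.mk I.1 (exists_P y I).choose

lemma xI_eq {I : S K A} {r : A} {F : Finset (MaximalSpectrum A)} {N : ℕ}
    (h : P y I r F N) : xI y I = Ideal.Quotient.mk I.1 r := by
  obtain ⟨F₀, N₀, h₀⟩ := (exists_P y I).choose_spec
  exact P_unique y h₀ h

lemma xI_mem : (fun I => xI y I) ∈ hatCarrier K A := by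
  intro I J h
  obtain ⟨F₀, N₀, h₀⟩ := (exists_P y I).choose_spec
  have hPJ : P y J (exists_P y I).choose F₀ N₀ := ⟨h₀.1.trans h, h₀.2⟩
  show Ideal.Quotient.factor (S := I.1) (T := J.1) h (xI y I) = xI y J
  rw [xI_eq y h₀, Ideal.Quotient.factor_mk, ← xI_eq y hPJ]

end Surj

/-- **The completion of a finitely generated commutative algebra over an algebraically
closed field decomposes as a product of the adic completions at all maximal ideals**:
`Â = lim←_{I of finite codimension} A/I ≅ ∏_𝔪 Â_𝔪` as `K`-algebras. -/
theorem completion_eq_prod_adicCompletions [IsAlgClosed K] [Algebra.FiniteType K A] :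
    Nonempty (↥(hatCarrier K A) ≃ₐ[K]
      (Π m : MaximalSpectrum A, AdicCompletion m.asIdeal A)) := by
  refine ⟨AlgEquiv.ofBijective (@phi K _ A _ _ _ _) ⟨?_, ?_⟩⟩
  · -- injectivity
    rw [injective_iff_map_eq_zero]
    intro x hx
    have hzero : ∀ (m : MaximalSpectrum A) (n : ℕ), x.1 (SmId m n) = 0 := by
      intro m n
      have h1 := congrArg (fun z => (z m).val n) hx
      have h2 : qcast m.asIdeal n (x.1 (SmId m n)) = 0 := h1
      exact (qcast m.asIdeal n).injective (by erw [h2, map_zero])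
    refine Subtype.ext (funext fun I => ?_)
    obtain ⟨F, N, hle⟩ := exists_inf_le I.1 I.2
    set J : S K A := ⟨⨅ m ∈ F, m.asIdeal ^ N, inf_findim F N⟩ with hJ
    obtain ⟨a, ha⟩ := Ideal.Quotient.mk_surjective (x.1 J)
    have haJ : a ∈ J.1 := by
      rw [Submodule.mem_iInf]
      intro m
      rw [Submodule.mem_iInf]
      intro hm
      have hle' : J.1 ≤ m.asIdeal ^ N := biInf_le _ hm
      have := hat_compat x J (SmId m N) hle'
      erw [hzero m N, ← ha, Ideal.Quotient.factor_mk] at this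
      exact Ideal.Quotient.eq_zero_iff_mem.mp this
    have hxJ : x.1 J = 0 := by
      rw [← ha, Ideal.Quotient.eq_zero_iff_mem]
      exact haJ
    have := hat_compat x J I hle
    rw [hxJ, map_zero] at this
    exact this.symm
  · -- surjectivity
    intro y
    refine ⟨⟨fun I => xI y I, xI_mem y⟩, ?_⟩
    refine funext fun m => Subtype.ext (funext fun n => ?_)
    obtain ⟨a, ha⟩ := Submodule.Quotient.mk_surjective _ ((y m).val n)
    have hP : P (K := K) y (SmId m n) a {m} n := by
      constructor
      · simp [SmId]
      · intro m' hm'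
        rw [Finset.mem_singleton] at hm'
        subst hm'
        rw [evalₐ_val (y m') ha.symm]
    show qcast m.asIdeal n (xI y (SmId m n)) = (y m).val n
    rw [xI_eq y hP]
    show qcast m.asIdeal n (Ideal.Quotient.mk (m.asIdeal ^ n) a) = (y m).val n
    rw [qcast_mk, ← ha]
    rfl

end Stmt12
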